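/- arXiv:1006.2797 — 6 statements merged into one kernel-verified Lean document; each statement's English description precedes it below -/
import Mathlib

section
/- Let (X, {R_e}, {D_v}, {f_e}) be an E-algebraic branching system and M the K-module of functions X → K. Define S_e(φ) = χ_{R_e}·(φ ∘ f_e^{-1}) and S_e^*(φ) = χ_{D_{r(e)}}·(φ ∘ f_e). Then S_e^* ∘ S_g = δ_{e,g} P_{r(e)} for all edges e, g, where P_v(φ) = χ_{D_v}·φ. -/
open scoped Classical

/-- An E-algebraic branching system for a directed graph with vertices `V`,
edges `E`, range map `r` and source map `s`, on a set (type) `X`. -/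
structure AlgBranchingSystem {V E : Type*} (r s : E → V) (X : Type*) where
  R : E → Set X
  D : V → Set X
  disjoint_R : ∀ ⦃e d : E⦄, e ≠ d → R e ∩ R d = ∅
  disjoint_D : ∀ ⦃u v : V⦄, u ≠ v → D u ∩ D v = ∅
  R_subset : ∀ e : E, R e ⊆ D (s e)
  D_eq_union : ∀ v : V, {e : E | s e = v}.Finite → {e : E | s e = v}.Nonempty →
      D v = ⋃ e ∈ {e : E | s e = v}, R e
  f : E → X → X
  g : E → X → X
  f_mapsTo : ∀ e : E, Set.MapsTo (f e) (D (r e)) (R e)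
  g_mapsTo : ∀ e : E, Set.MapsTo (g e) (R e) (D (r e))
  g_f : ∀ e : E, ∀ x ∈ D (r e), g e (f e x) = x
  f_g : ∀ e : E, ∀ x ∈ R e, f e (g e x) = x

namespace AlgBranchingSystem

variable {V E : Type*} {r s : E → V} {X : Type*} (K : Type*) [Field K]

/-- The operator `P_v : φ ↦ χ_{D_v} · φ` on the module of all functions `X → K`. -/
noncomputable def P (B : AlgBranchingSystem r s X) (v : V) : Module.End K (X → K) where
  toFun φ := (B.D v).indicator φ
  map_add' φ ψ := by
    funext x
    by_cases h : x ∈ B.D v <;> simp [Set.indicator_of_mem, Set.indicator_of_notMem, h]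
  map_smul' c φ := by
    funext x
    by_cases h : x ∈ B.D v <;> simp [Set.indicator_of_mem, Set.indicator_of_notMem, h]

/-- The operator `S_e : φ ↦ χ_{R_e} · (φ ∘ f_e⁻¹)`. -/
noncomputable def S (B : AlgBranchingSystem r s X) (e : E) : Module.End K (X → K) where
  toFun φ := (B.R e).indicator fun x => φ (B.g e x)
  map_add' φ ψ := by
    funext x
    by_cases h : x ∈ B.R e <;> simp [Set.indicator_of_mem, Set.indicator_of_notMem, h]
  map_smul' c φ := by
    funext x
    by_cases h : x ∈ B.R e <;> simp [Set.indicator_of_mem, Set.indicator_of_notMem, h]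

/-- The operator `S_e^* : φ ↦ χ_{D_{r(e)}} · (φ ∘ f_e)`. -/
noncomputable def Sstar (B : AlgBranchingSystem r s X) (e : E) : Module.End K (X → K) where
  toFun φ := (B.D (r e)).indicator fun x => φ (B.f e x)
  map_add' φ ψ := by
    funext x
    by_cases h : x ∈ B.D (r e) <;> simp [Set.indicator_of_mem, Set.indicator_of_notMem, h]
  map_smul' c φ := by
    funext x
    by_cases h : x ∈ B.D (r e) <;> simp [Set.indicator_of_mem, Set.indicator_of_notMem, h]

end AlgBranchingSystem

/-- `S_e^* ∘ S_g = δ_{e,g} P_{r(e)}` for all edges `e, g`. -/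
theorem Sstar_comp_S {V E : Type*} (r s : E → V) {X : Type*}
    (K : Type*) [Field K] (B : AlgBranchingSystem r s X) (e g : E) :
    B.Sstar K e * B.S K g = if e = g then B.P K (r e) else 0 := by
  ext φ x
  simp only [Module.End.mul_apply, AlgBranchingSystem.Sstar, AlgBranchingSystem.S,
    AlgBranchingSystem.P, LinearMap.coe_mk, AddHom.coe_mk]
  by_cases hx : x ∈ B.D (r e)
  · have hfx : B.f e x ∈ B.R e := B.f_mapsTo e hx
    rw [Set.indicator_of_mem hx]
    by_cases heg : e = g
    · subst heg
      rw [Set.indicator_of_mem hfx, B.g_f e x hx]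
      simp [Set.indicator_of_mem hx]
    · have : B.f e x ∉ B.R g := by
        intro h
        have := B.disjoint_R heg
        exact absurd (Set.ext_iff.mp this (B.f e x) |>.mp ⟨hfx, h⟩) (by simp)
      rw [Set.indicator_of_notMem this]
      simp [heg]
  · rw [Set.indicator_of_notMem hx]
    split <;> simp_all [Set.indicator_of_notMem]
end

section
/- Let (X, {R_e}, {D_v}, {f_e}) be an E-algebraic branching system, M the K-module of functions X → K, S_e(φ) = χ_{R_e}·(φ ∘ f_e^{-1}), S_e^*(φ) = χ_{D_{r(e)}}·(φ ∘ f_e), and P_v(φ) = χ_{D_v}·φ. If v ∈ E^0 satisfies 0 < #{e : s(e)=v} < ∞, then P_v = Σ_{e: s(e)=v} S_e S_e^* in Hom_K(M). -/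
open scoped Classical

/-- if `v` emits finitely many, and at least one, edges then
`P_v = Σ_{e : s(e) = v} S_e S_e^*`. -/
theorem P_eq_sum_S_Sstar {V E : Type*} (r s : E → V) {X : Type*}
    (K : Type*) [Field K] (B : AlgBranchingSystem r s X) (v : V)
    (h : {e : E | s e = v}.Finite) (hne : {e : E | s e = v}.Nonempty) :
    B.P K v = ∑ e ∈ h.toFinset, B.S K e * B.Sstar K e := by
  ext φ x
  have hterm : ∀ e, (B.S K e * B.Sstar K e) φ x = (B.R e).indicator φ x := by
    intro e
    show (B.R e).indicator (fun y => (B.D (r e)).indicator (fun z => φ (B.f e z)) (B.g e y)) x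
        = (B.R e).indicator φ x
    by_cases hx : x ∈ B.R e
    · rw [Set.indicator_of_mem hx, Set.indicator_of_mem hx,
        Set.indicator_of_mem (B.g_mapsTo e hx), B.f_g e x hx]
    · rw [Set.indicator_of_notMem hx, Set.indicator_of_notMem hx]
  have hsum : ∀ (ψ : X → K), (∑ e ∈ h.toFinset, B.S K e * B.Sstar K e) ψ x
      = ∑ e ∈ h.toFinset, (B.S K e * B.Sstar K e) ψ x := by
    intro ψ
    simp [LinearMap.sum_apply]
  show (B.D v).indicator φ x = _
  rw [hsum]
  simp only [hterm]
  by_cases hx : x ∈ B.D v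
  · obtain ⟨e0, he0, hxe0⟩ : ∃ e0, s e0 = v ∧ x ∈ B.R e0 := by
      have := (B.D_eq_union v h hne) ▸ hx
      simpa using this
    rw [Set.indicator_of_mem hx,
      Finset.sum_eq_single e0 (fun e he hne' => by
        rw [Set.indicator_of_notMem]
        intro hxe
        have : x ∈ B.R e ∩ B.R e0 := ⟨hxe, hxe0⟩
        rw [B.disjoint_R hne'] at this
        exact this)
      (fun habs => absurd (h.mem_toFinset.mpr he0) habs)]
    rw [Set.indicator_of_mem hxe0]
  · rw [Set.indicator_of_notMem hx]
    refine (Finset.sum_eq_zero fun e he => ?_).symm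
    rw [Set.indicator_of_notMem]
    intro hxe
    exact hx ((B.D_eq_union v h hne) ▸ Set.mem_biUnion (h.mem_toFinset.mp he) hxe)
end

section
/- Let E be a directed graph, K a field, and (X, {R_e}, {D_v}, {f_e}) an E-algebraic branching system. Then there exists a K-algebra homomorphism π : L_K(E) → Hom_K(M), where M is the K-module of all functions X → K, satisfying π(e) = S_e, π(e^*) = S_e^*, and π(v) = P_v for all e ∈ E^1 and v ∈ E^0, where S_e(φ) = χ_{R_e}·(φ ∘ f_e^{-1}), S_e^*(φ) = χ_{D_{r(e)}}·(φ ∘ f_e), and P_v(φ) = χ_{D_v}·φ. -/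
open scoped Classical

/-- Generators of the Leavitt path algebra: vertices, edges, and ghost edges. -/
inductive LeavittGen (V E : Type*) : Type _ where
  | vertex : V → LeavittGen V E
  | edge : E → LeavittGen V E
  | ghost : E → LeavittGen V E

/-- The defining relations of the Leavitt path algebra of the graph `(V, E, r, s)`. -/
inductive LeavittRel (K : Type*) [Field K] {V E : Type*} (r s : E → V) :
    FreeAlgebra K (LeavittGen V E) → FreeAlgebra K (LeavittGen V E) → Prop where
  | vertex_mul (u v : V) : LeavittRel K r s
      (FreeAlgebra.ι K (LeavittGen.vertex u : LeavittGen V E) *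
        FreeAlgebra.ι K (LeavittGen.vertex v : LeavittGen V E))
      (if u = v then FreeAlgebra.ι K (LeavittGen.vertex u : LeavittGen V E) else 0)
  | source_mul_edge (e : E) : LeavittRel K r s
      (FreeAlgebra.ι K (LeavittGen.vertex (s e) : LeavittGen V E) *
        FreeAlgebra.ι K (LeavittGen.edge e : LeavittGen V E))
      (FreeAlgebra.ι K (LeavittGen.edge e : LeavittGen V E))
  | edge_mul_range (e : E) : LeavittRel K r s
      (FreeAlgebra.ι K (LeavittGen.edge e : LeavittGen V E) *
        FreeAlgebra.ι K (LeavittGen.vertex (r e) : LeavittGen V E))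
      (FreeAlgebra.ι K (LeavittGen.edge e : LeavittGen V E))
  | range_mul_ghost (e : E) : LeavittRel K r s
      (FreeAlgebra.ι K (LeavittGen.vertex (r e) : LeavittGen V E) *
        FreeAlgebra.ι K (LeavittGen.ghost e : LeavittGen V E))
      (FreeAlgebra.ι K (LeavittGen.ghost e : LeavittGen V E))
  | ghost_mul_source (e : E) : LeavittRel K r s
      (FreeAlgebra.ι K (LeavittGen.ghost e : LeavittGen V E) *
        FreeAlgebra.ι K (LeavittGen.vertex (s e) : LeavittGen V E))
      (FreeAlgebra.ι K (LeavittGen.ghost e : LeavittGen V E))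
  | ghost_mul_edge (e d : E) : LeavittRel K r s
      (FreeAlgebra.ι K (LeavittGen.ghost e : LeavittGen V E) *
        FreeAlgebra.ι K (LeavittGen.edge d : LeavittGen V E))
      (if e = d then FreeAlgebra.ι K (LeavittGen.vertex (r e) : LeavittGen V E) else 0)
  | cuntz_krieger (v : V) (h : {e : E | s e = v}.Finite) (hne : {e : E | s e = v}.Nonempty) :
      LeavittRel K r s
      (FreeAlgebra.ι K (LeavittGen.vertex v : LeavittGen V E))
      (∑ e ∈ h.toFinset, FreeAlgebra.ι K (LeavittGen.edge e : LeavittGen V E) *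
        FreeAlgebra.ι K (LeavittGen.ghost e : LeavittGen V E))

/-- The Leavitt path algebra `L_K(E)` of the graph `(V, E, r, s)`, presented as the
quotient of the free algebra on the generators by the Leavitt relations. -/
abbrev LeavittAlgebra (K : Type*) [Field K] {V E : Type*} (r s : E → V) :=
  RingQuot (LeavittRel K r s)

/-- The image of a vertex `v ∈ E^0` in the Leavitt path algebra. -/
noncomputable def lpaVert (K : Type*) [Field K] {V E : Type*} (r s : E → V) (v : V) :
    LeavittAlgebra K r s :=
  RingQuot.mkAlgHom K (LeavittRel K r s) (FreeAlgebra.ι K (LeavittGen.vertex v : LeavittGen V E))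

/-- The image of an edge `e ∈ E^1` in the Leavitt path algebra. -/
noncomputable def lpaEdge (K : Type*) [Field K] {V E : Type*} (r s : E → V) (e : E) :
    LeavittAlgebra K r s :=
  RingQuot.mkAlgHom K (LeavittRel K r s) (FreeAlgebra.ι K (LeavittGen.edge e : LeavittGen V E))

/-- The image of a ghost edge `e^*` in the Leavitt path algebra. -/
noncomputable def lpaGhost (K : Type*) [Field K] {V E : Type*} (r s : E → V) (e : E) :
    LeavittAlgebra K r s :=
  RingQuot.mkAlgHom K (LeavittRel K r s) (FreeAlgebra.ι K (LeavittGen.ghost e : LeavittGen V E))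


section Aux

variable {V E : Type*} {r s : E → V} {X : Type*} {K : Type*} [Field K]
  (B : AlgBranchingSystem r s X)

open AlgBranchingSystem

lemma P_apply (v : V) (φ : X → K) : B.P K v φ = (B.D v).indicator φ := rfl
lemma S_apply (e : E) (φ : X → K) :
    B.S K e φ = (B.R e).indicator (fun x => φ (B.g e x)) := rfl
lemma Sstar_apply (e : E) (φ : X → K) :
    B.Sstar K e φ = (B.D (r e)).indicator (fun x => φ (B.f e x)) := rfl

lemma rel_PP (u v : V) : B.P K u * B.P K v = if u = v then B.P K u else 0 := by
  ext φ x
  by_cases h : u = v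
  · subst h
    simp only [Module.End.mul_apply, P_apply, if_pos rfl]
    by_cases hx : x ∈ B.D u <;>
      simp [P_apply, Set.indicator_of_mem, Set.indicator_of_notMem, hx]
  · simp only [Module.End.mul_apply, P_apply, if_neg h, LinearMap.zero_apply]
    by_cases hx : x ∈ B.D u
    · have hx' : x ∉ B.D v := fun hv => by
        have := B.disjoint_D h
        exact absurd (Set.mem_inter hx hv) (by simp [this])
      simp [P_apply, Set.indicator_of_mem, Set.indicator_of_notMem, hx, hx']
    · simp [P_apply, Set.indicator_of_notMem, hx]

lemma rel_PS (e : E) : B.P K (s e) * B.S K e = B.S K e := by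
  ext φ x
  simp only [Module.End.mul_apply, P_apply, S_apply]
  by_cases hx : x ∈ B.R e
  · have : x ∈ B.D (s e) := B.R_subset e hx
    simp [Set.indicator_of_mem, hx, this]
  · by_cases hx' : x ∈ B.D (s e) <;>
      simp [Set.indicator_of_mem, Set.indicator_of_notMem, hx, hx']

lemma rel_SP (e : E) : B.S K e * B.P K (r e) = B.S K e := by
  ext φ x
  simp only [Module.End.mul_apply, P_apply, S_apply]
  by_cases hx : x ∈ B.R e
  · have : B.g e x ∈ B.D (r e) := B.g_mapsTo e hx
    simp [Set.indicator_of_mem, hx, this]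
  · simp [Set.indicator_of_notMem, hx]

lemma rel_PSstar (e : E) : B.P K (r e) * B.Sstar K e = B.Sstar K e := by
  ext φ x
  simp only [Module.End.mul_apply, P_apply, Sstar_apply]
  by_cases hx : x ∈ B.D (r e) <;>
    simp [Set.indicator_of_mem, Set.indicator_of_notMem, hx]

lemma rel_SstarP (e : E) : B.Sstar K e * B.P K (s e) = B.Sstar K e := by
  ext φ x
  simp only [Module.End.mul_apply, P_apply, Sstar_apply]
  by_cases hx : x ∈ B.D (r e)
  · have : B.f e x ∈ B.D (s e) := B.R_subset e (B.f_mapsTo e hx)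
    simp [Set.indicator_of_mem, hx, this]
  · simp [Set.indicator_of_notMem, hx]

lemma rel_SstarS (e d : E) :
    B.Sstar K e * B.S K d = if e = d then B.P K (r e) else 0 := by
  ext φ x
  by_cases h : e = d
  · subst h
    simp only [Module.End.mul_apply, Sstar_apply, S_apply, P_apply, if_pos rfl]
    by_cases hx : x ∈ B.D (r e)
    · have hf : B.f e x ∈ B.R e := B.f_mapsTo e hx
      simp [P_apply, Set.indicator_of_mem, hx, hf, B.g_f e x hx]
    · simp [P_apply, Set.indicator_of_notMem, hx]
  · simp only [Module.End.mul_apply, Sstar_apply, S_apply, if_neg h,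
      LinearMap.zero_apply]
    by_cases hx : x ∈ B.D (r e)
    · have hf : B.f e x ∈ B.R e := B.f_mapsTo e hx
      have hf' : B.f e x ∉ B.R d := fun hd => by
        have := B.disjoint_R h
        exact absurd (Set.mem_inter hf hd) (by simp [this])
      simp [Set.indicator_of_mem, Set.indicator_of_notMem, hx, hf']
    · simp [Set.indicator_of_notMem, hx]

lemma rel_SSstar (e : E) (φ : X → K) :
    (B.S K e * B.Sstar K e) φ = (B.R e).indicator φ := by
  funext x
  simp only [Module.End.mul_apply, Sstar_apply, S_apply]
  by_cases hx : x ∈ B.R e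
  · have hg : B.g e x ∈ B.D (r e) := B.g_mapsTo e hx
    simp [Set.indicator_of_mem, hx, hg, B.f_g e x hx]
  · simp [Set.indicator_of_notMem, hx]

lemma rel_CK (v : V) (h : {e : E | s e = v}.Finite)
    (hne : {e : E | s e = v}.Nonempty) :
    B.P K v = ∑ e ∈ h.toFinset, B.S K e * B.Sstar K e := by
  ext φ x
  simp only [P_apply, LinearMap.coe_sum, Finset.sum_apply, rel_SSstar (K := K) B]
  by_cases hx : x ∈ B.D v
  · have hx' : x ∈ ⋃ e ∈ {e : E | s e = v}, B.R e := (B.D_eq_union v h hne) ▸ hx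
    obtain ⟨e, he, hxe⟩ := Set.mem_iUnion₂.mp hx'
    rw [Set.indicator_of_mem hx,
      Finset.sum_eq_single e
        (fun d hd hde => Set.indicator_of_notMem (fun hxd => by
          have := B.disjoint_R (Ne.symm hde)
          exact absurd (Set.mem_inter hxe hxd) (by simp [this])) _)
        (fun hnot => absurd (h.mem_toFinset.mpr he) hnot),
      Set.indicator_of_mem hxe]
  · rw [Set.indicator_of_notMem hx]
    refine (Finset.sum_eq_zero fun e he => ?_).symm
    have hse : s e = v := h.mem_toFinset.mp he
    exact Set.indicator_of_notMem (fun hxe => hx (hse ▸ B.R_subset e hxe)) _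

end Aux

/-- every E-algebraic branching system induces a representation
`π : L_K(E) → Hom_K(M)` with `π(v) = P_v`, `π(e) = S_e` and `π(e^*) = S_e^*`. -/
theorem exists_induced_representation {V E : Type*} (r s : E → V) {X : Type*}
    (K : Type*) [Field K] (B : AlgBranchingSystem r s X) :
    ∃ π : LeavittAlgebra K r s →ₐ[K] Module.End K (X → K),
      (∀ v : V, π (lpaVert K r s v) = B.P K v) ∧
      (∀ e : E, π (lpaEdge K r s e) = B.S K e) ∧
      (∀ e : E, π (lpaGhost K r s e) = B.Sstar K e) := by
  classical
  let Φ : LeavittGen V E → Module.End K (X → K) := fun g =>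
    match g with
    | LeavittGen.vertex v => B.P K v
    | LeavittGen.edge e => B.S K e
    | LeavittGen.ghost e => B.Sstar K e
  let F : FreeAlgebra K (LeavittGen V E) →ₐ[K] Module.End K (X → K) :=
    FreeAlgebra.lift K Φ
  have hrel : ∀ ⦃x y⦄, LeavittRel K r s x y → F x = F y := by
    intro x y hxy
    induction hxy with
    | vertex_mul u v =>
        simp only [F, map_mul, FreeAlgebra.lift_ι_apply, apply_ite, map_zero, Φ]
        have h := rel_PP (K := K) B u v
        split_ifs at h ⊢ <;> exact h
    | source_mul_edge e =>
        simp only [F, map_mul, FreeAlgebra.lift_ι_apply, Φ]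
        exact rel_PS B e
    | edge_mul_range e =>
        simp only [F, map_mul, FreeAlgebra.lift_ι_apply, Φ]
        exact rel_SP B e
    | range_mul_ghost e =>
        simp only [F, map_mul, FreeAlgebra.lift_ι_apply, Φ]
        exact rel_PSstar B e
    | ghost_mul_source e =>
        simp only [F, map_mul, FreeAlgebra.lift_ι_apply, Φ]
        exact rel_SstarP B e
    | ghost_mul_edge e d =>
        simp only [F, map_mul, FreeAlgebra.lift_ι_apply, apply_ite, map_zero, Φ]
        have h := rel_SstarS (K := K) B e d
        split_ifs at h ⊢ <;> exact h
    | cuntz_krieger v h hne =>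
        simp only [F, map_sum, map_mul, FreeAlgebra.lift_ι_apply, Φ]
        exact rel_CK B v h hne
  refine ⟨RingQuot.liftAlgHom K ⟨F, hrel⟩, fun v => ?_, fun e => ?_, fun e => ?_⟩ <;>
    simp [lpaVert, lpaEdge, lpaGhost, RingQuot.liftAlgHom_mkAlgHom_apply, F,
      FreeAlgebra.lift_ι_apply, Φ]
end

section
/- Let E = (E^0, E^1, r, s) be a directed graph with E^0 and E^1 countable. Then there exists an E-algebraic branching system (X, {R_e}, {D_v}, {f_e}) in which X is a subset of ℝ (a union of half-open intervals), each R_e is a half-open interval of length 1, and the D_v are half-open intervals or unions of the R_e. -/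
open scoped Classical

/-- every countable graph admits an E-algebraic branching system inside `ℝ`,
where each `R_e` is a half-open interval of length `1` and each `D_v` is either a
half-open interval or the union of the `R_e` with `s(e) = v`. -/
theorem exists_branching_system_in_real {V E : Type*} (r s : E → V)
    [Countable V] [Countable E] :
    ∃ (X : Set ℝ) (B : AlgBranchingSystem r s X),
      (∀ e : E, ∃ a : ℝ, Subtype.val '' B.R e = Set.Ico a (a + 1)) ∧
      (∀ v : V, (∃ a b : ℝ, Subtype.val '' B.D v = Set.Ico a b) ∨
        B.D v = ⋃ e ∈ {e : E | s e = v}, B.R e) := by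
  obtain ⟨ι, hι⟩ := Countable.exists_injective_nat (E ⊕ V)
  -- half-open intervals of length 1
  set I : ℕ → Set ℝ := fun n => Set.Ico (n : ℝ) ((n : ℝ) + 1) with hIdef
  have hIdisj : ∀ {m n : ℕ}, m ≠ n → I m ∩ I n = ∅ := by
    intro m n hmn
    ext x
    simp only [hIdef, Set.mem_inter_iff, Set.mem_Ico, Set.mem_empty_iff_false, iff_false]
    rintro ⟨⟨h1, h2⟩, ⟨h3, h4⟩⟩
    rcases lt_or_gt_of_ne hmn with h | h
    · have : (m : ℝ) + 1 ≤ n := by exact_mod_cast Nat.succ_le_of_lt h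
      linarith
    · have : (n : ℝ) + 1 ≤ m := by exact_mod_cast Nat.succ_le_of_lt h
      linarith
  have hImk : ∀ n : ℕ, Cardinal.mk (I n) = Cardinal.continuum := fun n =>
    Cardinal.mk_Ico_real (lt_add_one _)
  set X : Set ℝ := ⋃ i : E ⊕ V, I (ι i) with hXdef
  set R' : E → Set ℝ := fun e => I (ι (Sum.inl e)) with hR'def
  set D' : V → Set ℝ := fun v =>
    if ∃ e, s e = v then ⋃ e ∈ {e : E | s e = v}, R' e else I (ι (Sum.inr v)) with hD'def
  have hR'X : ∀ e, R' e ⊆ X := fun e => Set.subset_iUnion (fun i => I (ι i)) (Sum.inl e)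
  have hD'X : ∀ v, D' v ⊆ X := by
    intro v
    simp only [hD'def]
    split
    · exact Set.iUnion₂_subset fun e _ => hR'X e
    · exact Set.subset_iUnion (fun i => I (ι i)) (Sum.inr v)
  have hD'mk : ∀ v, Cardinal.mk (D' v) = Cardinal.continuum := by
    intro v
    refine le_antisymm ?_ ?_
    · calc Cardinal.mk (D' v) ≤ Cardinal.mk ℝ := Cardinal.mk_set_le _
        _ = Cardinal.continuum := Cardinal.mk_real
    · simp only [hD'def]
      split
      · rename_i h
        obtain ⟨e, he⟩ := h
        have hsub : R' e ⊆ ⋃ e ∈ {e : E | s e = v}, R' e :=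
          Set.subset_biUnion_of_mem he
        calc Cardinal.continuum = Cardinal.mk (R' e) := (hImk _).symm
          _ ≤ _ := Cardinal.mk_le_mk_of_subset hsub
      · exact (hImk _).symm.le
  -- sets inside the subtype X
  set Rs : E → Set X := fun e => Subtype.val ⁻¹' R' e with hRsdef
  set Ds : V → Set X := fun v => Subtype.val ⁻¹' D' v with hDsdef
  have hmkpre : ∀ (A : Set ℝ), A ⊆ X → Cardinal.mk (Subtype.val ⁻¹' A : Set X) = Cardinal.mk A := by
    intro A hA
    apply Cardinal.mk_preimage_of_injective_of_subset_range Subtype.val A Subtype.val_injective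
    rwa [Subtype.range_coe]
  have hcard : ∀ e : E, Cardinal.mk (Ds (r e)) = Cardinal.mk (Rs e) := by
    intro e
    rw [hmkpre _ (hD'X (r e)), hmkpre _ (hR'X e), hD'mk, hR'def]
    exact (hImk _).symm
  have hDpos : ∀ v, (∃ e, s e = v) → D' v = ⋃ e ∈ {e : E | s e = v}, R' e := by
    intro v hv
    simp only [hD'def]
    rw [if_pos hv]
  have hDneg : ∀ v, ¬(∃ e, s e = v) → D' v = I (ι (Sum.inr v)) := by
    intro v hv
    simp only [hD'def]
    rw [if_neg hv]
  have hF : ∀ e : E, Nonempty ((Ds (r e)) ≃ (Rs e)) := fun e => Cardinal.eq.mp (hcard e)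
  set F : ∀ e : E, (Ds (r e)) ≃ (Rs e) := fun e => (hF e).some with hFdef
  refine ⟨X, ?_, ?_, ?_⟩
  · exact
    { R := Rs
      D := Ds
      disjoint_R := by
        intro e d hed
        have : R' e ∩ R' d = ∅ := hIdisj fun h => hed (Sum.inl_injective (hι h))
        ext x
        simp only [Set.mem_inter_iff, Set.mem_preimage, Set.mem_empty_iff_false, iff_false,
          hRsdef]
        intro hx
        exact absurd (Set.mem_inter hx.1 hx.2) (by rw [this]; exact Set.notMem_empty _)
      disjoint_D := by
        intro u v huv
        have : D' u ∩ D' v = ∅ := by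
          have key : ∀ x, x ∈ D' u → x ∈ D' v → False := by
            intro x hu hv
            simp only [hD'def] at hu hv
            split at hu <;> split at hv
            · simp only [Set.mem_iUnion] at hu hv
              obtain ⟨e1, he1, hx1⟩ := hu
              obtain ⟨e2, he2, hx2⟩ := hv
              have hne : e1 ≠ e2 := by
                rintro rfl; exact huv (he1.symm.trans he2)
              have : R' e1 ∩ R' e2 = ∅ := hIdisj fun h => hne (Sum.inl_injective (hι h))
              exact absurd (Set.mem_inter hx1 hx2) (by rw [this]; exact Set.notMem_empty _)
            · simp only [Set.mem_iUnion] at hu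
              obtain ⟨e1, he1, hx1⟩ := hu
              have : R' e1 ∩ I (ι (Sum.inr v)) = ∅ := hIdisj fun h => Sum.inl_ne_inr (hι h)
              exact absurd (Set.mem_inter hx1 hv) (by rw [this]; exact Set.notMem_empty _)
            · simp only [Set.mem_iUnion] at hv
              obtain ⟨e2, he2, hx2⟩ := hv
              have : I (ι (Sum.inr u)) ∩ R' e2 = ∅ := hIdisj fun h => Sum.inr_ne_inl (hι h)
              exact absurd (Set.mem_inter hu hx2) (by rw [this]; exact Set.notMem_empty _)
            · have : I (ι (Sum.inr u)) ∩ I (ι (Sum.inr v)) = ∅ :=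
                hIdisj fun h => huv (Sum.inr_injective (hι h))
              exact absurd (Set.mem_inter hu hv) (by rw [this]; exact Set.notMem_empty _)
          ext x
          simp only [Set.mem_inter_iff, Set.mem_empty_iff_false, iff_false]
          exact fun hx => key x hx.1 hx.2
        ext x
        simp only [Set.mem_inter_iff, Set.mem_preimage, Set.mem_empty_iff_false, iff_false,
          hDsdef]
        intro hx
        exact absurd (Set.mem_inter hx.1 hx.2) (by rw [this]; exact Set.notMem_empty _)
      R_subset := by
        intro e x hx
        simp only [hDsdef, Set.mem_preimage, hDpos (s e) ⟨e, rfl⟩]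
        exact Set.mem_biUnion (show e ∈ {e' : E | s e' = s e} from rfl) hx
      D_eq_union := by
        intro v _ hne
        obtain ⟨e, he⟩ := hne
        ext x
        simp only [hDsdef, Set.mem_preimage, hDpos v ⟨e, he⟩, Set.mem_iUnion, hRsdef,
          Set.mem_setOf_eq]
      f := fun e x => if hx : x ∈ Ds (r e) then ((F e) ⟨x, hx⟩ : X) else x
      g := fun e x => if hx : x ∈ Rs e then ((F e).symm ⟨x, hx⟩ : X) else x
      f_mapsTo := by
        intro e x hx
        simp only [dif_pos hx]
        exact ((F e) ⟨x, hx⟩).2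
      g_mapsTo := by
        intro e x hx
        simp only [dif_pos hx]
        exact ((F e).symm ⟨x, hx⟩).2
      g_f := by
        intro e x hx
        simp only [dif_pos hx]
        rw [dif_pos ((F e) ⟨x, hx⟩).2]
        have : (⟨((F e) ⟨x, hx⟩ : X), ((F e) ⟨x, hx⟩).2⟩ : Rs e) = (F e) ⟨x, hx⟩ := rfl
        rw [this, Equiv.symm_apply_apply]
      f_g := by
        intro e x hx
        simp only [dif_pos hx]
        rw [dif_pos ((F e).symm ⟨x, hx⟩).2]
        have : (⟨((F e).symm ⟨x, hx⟩ : X), ((F e).symm ⟨x, hx⟩).2⟩ : Ds (r e)) =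
            (F e).symm ⟨x, hx⟩ := rfl
        rw [this, Equiv.apply_symm_apply] }
  · intro e
    refine ⟨(ι (Sum.inl e) : ℝ), ?_⟩
    rw [Set.image_preimage_eq_inter_range, Subtype.range_coe,
      Set.inter_eq_left.mpr (hR'X e)]
  · intro v
    by_cases h : ∃ e, s e = v
    · right
      ext x
      simp only [hDsdef, Set.mem_preimage, hDpos v h, Set.mem_iUnion, hRsdef,
        Set.mem_setOf_eq]
    · left
      refine ⟨(ι (Sum.inr v) : ℝ), (ι (Sum.inr v) : ℝ) + 1, ?_⟩
      rw [Set.image_preimage_eq_inter_range, Subtype.range_coe,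
        Set.inter_eq_left.mpr (hD'X v)]
      rw [hDneg v h]
end

section
/- Let E be the graph with a single vertex and a single loop, so that L_K(E) ≅ K[x, x^{-1}]. Fix an irrational θ ∈ [0,1), and let f : [0,1) → [0,1) be f(t) = (t+θ) mod 1. Let M be the K-module of functions [0,1) → K and define S(φ) = φ ∘ f^{-1}, S^*(φ) = φ ∘ f. Then the K-algebra homomorphism K[x,x^{-1}] → Hom_K(M) sending x ↦ S and x^{-1} ↦ S^* is injective. -/
/-- Rotation by `θ` on the half-open interval `[0,1)`: `t ↦ (t + θ) mod 1`. -/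
noncomputable def rotMod (θ : ℝ) (t : ↥(Set.Ico (0 : ℝ) 1)) : ↥(Set.Ico (0 : ℝ) 1) :=
  ⟨Int.fract ((t : ℝ) + θ), Int.fract_nonneg _, Int.fract_lt_one _⟩

/-- The composition operator `φ ↦ φ ∘ h` on the `K`-module of all functions `A → K`. -/
def compOp (K : Type*) [Field K] {A : Type*} (h : A → A) : Module.End K (A → K) where
  toFun φ := φ ∘ h
  map_add' _ _ := rfl
  map_smul' _ _ := rfl

lemma rot_comp (a b : ℝ) (t : ↥(Set.Ico (0 : ℝ) 1)) :
    rotMod a (rotMod b t) = rotMod (a + b) t := by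
  apply Subtype.ext
  show Int.fract (Int.fract ((t:ℝ) + b) + a) = Int.fract ((t:ℝ) + (a + b))
  rw [show Int.fract ((t:ℝ) + b) + a = ((t:ℝ) + (a + b)) - ↑⌊(t:ℝ) + b⌋ by
    rw [Int.fract]; ring, Int.fract_sub_intCast]

lemma rot_zero (t : ↥(Set.Ico (0 : ℝ) 1)) : rotMod 0 t = t := by
  apply Subtype.ext
  show Int.fract ((t:ℝ) + 0) = t
  rw [add_zero, Int.fract_eq_self.mpr ⟨t.2.1, t.2.2⟩]

lemma compOp_mul (K : Type*) [Field K] {A : Type*} (g h : A → A) :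
    compOp K g * compOp K h = compOp K (h ∘ g) := rfl

/-- let `θ ∈ [0,1)` be irrational and `f(t) = (t + θ) mod 1` the corresponding
irrational rotation of `[0,1)`.  The `K`-algebra homomorphism from the Laurent polynomials
`K[x,x⁻¹]` (the Leavitt path algebra of the graph with one vertex and one loop) to
`Hom_K(M)`, `M` the module of all functions `[0,1) → K`, sending `x ↦ S = (φ ↦ φ ∘ f⁻¹)` and
`x⁻¹ ↦ S^* = (φ ↦ φ ∘ f)`, is injective. -/
theorem laurent_rep_injective (K : Type*) [Field K] (θ : ℝ) (hθ : Irrational θ)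
    (hθ0 : 0 ≤ θ) (hθ1 : θ < 1)
    (π : LaurentPolynomial K →ₐ[K] Module.End K (↥(Set.Ico (0 : ℝ) 1) → K))
    (hx : π (LaurentPolynomial.T 1) = compOp K (rotMod (-θ)))
    (hxinv : π (LaurentPolynomial.T (-1)) = compOp K (rotMod θ)) :
    Function.Injective π := by
  classical
  have key : ∀ n : ℤ, π (LaurentPolynomial.T n) = compOp K (rotMod (-(n : ℝ) * θ)) := by
    intro n
    induction n using Int.induction_on with
    | zero =>
        rw [LaurentPolynomial.T_zero, map_one]
        have : (-(0:ℤ) : ℝ) * θ = 0 := by norm_num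
        rw [this]
        ext φ t
        simp [compOp, rot_zero]
    | succ n ih =>
        have : LaurentPolynomial.T (R := K) ((n:ℤ) + 1)
            = LaurentPolynomial.T n * LaurentPolynomial.T 1 := by
          rw [← LaurentPolynomial.T_add]
        rw [this, map_mul, ih, hx, compOp_mul]
        congr 1
        funext t
        rw [Function.comp_apply, rot_comp]
        congr 1
        push_cast
        ring
    | pred n ih =>
        have : LaurentPolynomial.T (R := K) (-(n:ℤ) - 1)
            = LaurentPolynomial.T (-n) * LaurentPolynomial.T (-1) := by
          rw [← LaurentPolynomial.T_add]; ring_nf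
        rw [this, map_mul, ih, hxinv, compOp_mul]
        congr 1
        funext t
        rw [Function.comp_apply, rot_comp]
        congr 1
        push_cast
        ring
  rw [injective_iff_map_eq_zero]
  intro p hp
  set pt0 : ↥(Set.Ico (0:ℝ) 1) := ⟨0, by norm_num⟩ with hpt0
  -- distinct points
  have hdist : ∀ n m : ℤ, n ≠ m →
      rotMod (-(n : ℝ) * θ) pt0 ≠ rotMod (-(m : ℝ) * θ) pt0 := by
    intro n m hnm h
    have h' : Int.fract ((pt0:ℝ) + -(n:ℝ) * θ) = Int.fract ((pt0:ℝ) + -(m:ℝ) * θ) :=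
      congrArg Subtype.val h
    rw [Int.fract_eq_fract] at h'
    obtain ⟨z, hz⟩ := h'
    have : ((m - n : ℤ) : ℝ) * θ = (z : ℝ) := by push_cast; linarith
    exact (hθ.intCast_mul (by omega : (m - n : ℤ) ≠ 0)).ne_int z this
  ext m
  -- express p as sum
  have hrep : π p = p.coeff.sum fun n a => a • compOp K (rotMod (-(n : ℝ) * θ)) := by
    conv_lhs => rw [← AddMonoidAlgebra.sum_coeff_single p]
    rw [map_finsuppSum]
    refine Finsupp.sum_congr fun n _ => ?_
    have : (AddMonoidAlgebra.single n (p.coeff n) : LaurentPolynomial K) = p.coeff n • LaurentPolynomial.T n := by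
      rw [LaurentPolynomial.T, AddMonoidAlgebra.smul_single', mul_one]
    rw [this, map_smul, key]
  set φ : ↥(Set.Ico (0:ℝ) 1) → K :=
    fun t => if t = rotMod (-(m : ℝ) * θ) pt0 then 1 else 0 with hφ
  have := congrFun (congrFun (congrArg DFunLike.coe hp) φ) pt0
  rw [hrep] at this
  simp only [Finsupp.sum, LinearMap.coe_sum, Finset.sum_apply, LinearMap.smul_apply,
    Pi.smul_apply, LinearMap.zero_apply, Pi.zero_apply, smul_eq_mul] at this
  by_cases hm : m ∈ p.coeff.support
  · rw [Finset.sum_eq_single_of_mem m hm] at this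
    · simpa [compOp, φ] using this
    · intro n _ hn
      simp only [compOp, LinearMap.coe_mk, AddHom.coe_mk, Function.comp_apply, hφ]
      rw [if_neg (hdist n m hn), mul_zero]
  · simp [Finsupp.notMem_support_iff.mp hm]
end

section
/- Let E be a row-finite directed graph and Φ : L_K(E) → Hom_K(V) a representation. Suppose there is a basis of V, compatible with the decompositions V_u = ⊕_{e: s(e)=u} V_e (V_u = Φ(u)V, V_e = Φ(e)Φ(e^*)V), which satisfies condition (B2B): for every edge e, Φ(e) maps the chosen basis of V_{r(e)} bijectively onto the chosen basis of V_e. Then the restriction Φ_1 of Φ to W = ⊕_{u∈E^0} V_u is equivalent to a representation π : L_K(E) → Hom_K(M) induced by an E-algebraic branching system, where M is the module of finitely supported K-valued functions on the index set X of the basis of W. -/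
open scoped Classical

section AuxRep

variable {V E : Type*} {r s : E → V} {X : Type*} (K : Type*) [Field K]

/-- The operators on `X →₀ K` attached to the generators by a branching system. -/
noncomputable def myGenOp (B : AlgBranchingSystem r s X) :
    LeavittGen V E → Module.End K (X →₀ K)
  | .vertex v => Finsupp.lsum K fun x => if x ∈ B.D v then Finsupp.lsingle x else 0
  | .edge e => Finsupp.lsum K fun x => if x ∈ B.D (r e) then Finsupp.lsingle (B.f e x) else 0
  | .ghost e => Finsupp.lsum K fun x => if x ∈ B.R e then Finsupp.lsingle (B.g e x) else 0

theorem myGenOp_vertex (B : AlgBranchingSystem r s X) (v : V) (x : X) (c : K) :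
    myGenOp K B (.vertex v) (Finsupp.single x c) =
      if x ∈ B.D v then Finsupp.single x c else 0 := by
  show (Finsupp.lsum K fun x => if x ∈ B.D v then Finsupp.lsingle x else 0)
      (Finsupp.single x c) = _
  rw [Finsupp.lsum_single]
  split_ifs <;> simp

theorem myGenOp_edge (B : AlgBranchingSystem r s X) (e : E) (x : X) (c : K) :
    myGenOp K B (.edge e) (Finsupp.single x c) =
      if x ∈ B.D (r e) then Finsupp.single (B.f e x) c else 0 := by
  show (Finsupp.lsum K fun x => if x ∈ B.D (r e) then Finsupp.lsingle (B.f e x) else 0)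
      (Finsupp.single x c) = _
  rw [Finsupp.lsum_single]
  split_ifs <;> simp

theorem myGenOp_ghost (B : AlgBranchingSystem r s X) (e : E) (x : X) (c : K) :
    myGenOp K B (.ghost e) (Finsupp.single x c) =
      if x ∈ B.R e then Finsupp.single (B.g e x) c else 0 := by
  show (Finsupp.lsum K fun x => if x ∈ B.R e then Finsupp.lsingle (B.g e x) else 0)
      (Finsupp.single x c) = _
  rw [Finsupp.lsum_single]
  split_ifs <;> simp

theorem myGenRel (B : AlgBranchingSystem r s X) :
    ∀ ⦃a b : FreeAlgebra K (LeavittGen V E)⦄, LeavittRel K r s a b →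
      FreeAlgebra.lift K (myGenOp K B) a = FreeAlgebra.lift K (myGenOp K B) b := by
  intro a b h
  cases h with
  | vertex_mul u v =>
      rw [apply_ite (FreeAlgebra.lift K (myGenOp K B))]
      simp only [map_mul, FreeAlgebra.lift_ι_apply, map_zero]
      refine Finsupp.lhom_ext fun x c => ?_
      rw [Module.End.mul_apply, myGenOp_vertex]
      by_cases huv : u = v
      · subst huv
        rw [if_pos rfl]
        split_ifs with h1
        · rw [myGenOp_vertex, if_pos h1]
        · rw [map_zero, myGenOp_vertex, if_neg h1]
      · rw [if_neg huv, LinearMap.zero_apply]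
        split_ifs with h1
        · rw [myGenOp_vertex, if_neg]
          intro h2
          exact Set.eq_empty_iff_forall_notMem.mp (B.disjoint_D huv) x ⟨h2, h1⟩
        · rw [map_zero]
  | source_mul_edge e =>
      simp only [map_mul, FreeAlgebra.lift_ι_apply]
      refine Finsupp.lhom_ext fun x c => ?_
      rw [Module.End.mul_apply, myGenOp_edge]
      split_ifs with h1
      · rw [myGenOp_vertex, if_pos (B.R_subset e (B.f_mapsTo e h1))]
      · rw [map_zero]
  | edge_mul_range e =>
      simp only [map_mul, FreeAlgebra.lift_ι_apply]
      refine Finsupp.lhom_ext fun x c => ?_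
      rw [Module.End.mul_apply, myGenOp_vertex]
      split_ifs with h1
      · rfl
      · rw [map_zero, myGenOp_edge, if_neg h1]
  | range_mul_ghost e =>
      simp only [map_mul, FreeAlgebra.lift_ι_apply]
      refine Finsupp.lhom_ext fun x c => ?_
      rw [Module.End.mul_apply, myGenOp_ghost]
      split_ifs with h1
      · rw [myGenOp_vertex, if_pos (B.g_mapsTo e h1)]
      · rw [map_zero]
  | ghost_mul_source e =>
      simp only [map_mul, FreeAlgebra.lift_ι_apply]
      refine Finsupp.lhom_ext fun x c => ?_
      rw [Module.End.mul_apply, myGenOp_vertex]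
      split_ifs with h1
      · rfl
      · rw [map_zero, myGenOp_ghost, if_neg fun h2 => h1 (B.R_subset e h2)]
  | ghost_mul_edge e d =>
      rw [apply_ite (FreeAlgebra.lift K (myGenOp K B))]
      simp only [map_mul, FreeAlgebra.lift_ι_apply, map_zero]
      refine Finsupp.lhom_ext fun x c => ?_
      rw [Module.End.mul_apply, myGenOp_edge]
      by_cases hed : e = d
      · subst hed
        rw [if_pos rfl, myGenOp_vertex]
        split_ifs with h1
        · rw [myGenOp_ghost, if_pos (B.f_mapsTo e h1), B.g_f e x h1]
        · rw [map_zero]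
      · rw [if_neg hed, LinearMap.zero_apply]
        split_ifs with h1
        · rw [myGenOp_ghost, if_neg]
          intro h2
          exact Set.eq_empty_iff_forall_notMem.mp (B.disjoint_R hed) (B.f d x)
            ⟨h2, B.f_mapsTo d h1⟩
        · rw [map_zero]
  | cuntz_krieger v hfin hne =>
      simp only [FreeAlgebra.lift_ι_apply, map_sum]
      refine Finsupp.lhom_ext fun x c => ?_
      rw [myGenOp_vertex, LinearMap.sum_apply]
      have hterm : ∀ d ∈ hfin.toFinset,
          (FreeAlgebra.lift K (myGenOp K B)
            (FreeAlgebra.ι K (LeavittGen.edge d) * FreeAlgebra.ι K (LeavittGen.ghost d)))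
            (Finsupp.single x c) = if x ∈ B.R d then Finsupp.single x c else 0 := by
        intro d _
        simp only [map_mul, FreeAlgebra.lift_ι_apply]
        rw [Module.End.mul_apply, myGenOp_ghost]
        split_ifs with h1
        · rw [myGenOp_edge, if_pos (B.g_mapsTo d h1), B.f_g d x h1]
        · rw [map_zero]
      rw [Finset.sum_congr rfl hterm]
      by_cases hx : x ∈ B.D v
      · have hx2 := hx
        rw [B.D_eq_union v hfin hne] at hx2
        simp only [Set.mem_iUnion, Set.mem_setOf_eq, exists_prop] at hx2
        obtain ⟨e0, he0, hxe0⟩ := hx2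
        rw [if_pos hx]
        rw [Finset.sum_eq_single_of_mem e0 (hfin.mem_toFinset.mpr he0)]
        · rw [if_pos hxe0]
        · intro d hd hde
          rw [if_neg]
          intro h2
          exact Set.eq_empty_iff_forall_notMem.mp (B.disjoint_R hde) x ⟨h2, hxe0⟩
      · rw [if_neg hx]
        refine (Finset.sum_eq_zero fun d hd => ?_).symm
        rw [if_neg]
        intro h2
        exact hx (by
          have hsd : s d = v := (hfin.mem_toFinset.mp hd)
          exact hsd ▸ B.R_subset d h2)

end AuxRep

/-- let `E` be row-finite and `Φ : L_K(E) → Hom_K(V)` a representation.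
Suppose there is a basis `{m_x : x ∈ X}` compatible with the decompositions
`V_u = ⊕_{s(e)=u} V_e` (indexed by sets `D_u = ⊔_{s(e)=u} R_e`) satisfying condition (B2B):
`Φ(e)` maps the basis of `V_{r(e)}` bijectively onto the basis of `V_e`.  Then the
restriction `Φ₁` of `Φ` to `W = ⊕_u V_u` is equivalent to a representation `π` of `L_K(E)`
on the module of finitely supported functions on `X` induced by an E-algebraic branching
system. -/
theorem restriction_equivalent_to_branching_rep {V E : Type*} (r s : E → V)
    (K : Type*) [Field K] {Vsp : Type*} [AddCommGroup Vsp] [Module K Vsp]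
    (hrow : ∀ v : V, {e : E | s e = v}.Finite)
    (Φ : LeavittAlgebra K r s →ₐ[K] Module.End K Vsp)
    (X : Type*) (D : V → Set X) (R : E → Set X)
    (hdisjD : ∀ ⦃u v : V⦄, u ≠ v → D u ∩ D v = ∅)
    (hdisjR : ∀ ⦃e d : E⦄, e ≠ d → R e ∩ R d = ∅)
    (hRD : ∀ e : E, R e ⊆ D (s e))
    (hDeq : ∀ v : V, {e : E | s e = v}.Nonempty → D v = ⋃ e ∈ {e : E | s e = v}, R e)
    (hcover : ∀ x : X, ∃ u : V, x ∈ D u)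
    (m : X → Vsp)
    (hindep : ∀ u : V, LinearIndependent K (fun x : D u => m (x : X)))
    (hspanD : ∀ u : V, Submodule.span K (m '' D u) = LinearMap.range (Φ (lpaVert K r s u)))
    (hspanR : ∀ e : E, Submodule.span K (m '' R e) =
      LinearMap.range (Φ (lpaEdge K r s e) * Φ (lpaGhost K r s e)))
    (hB2B : ∀ e : E, Φ (lpaEdge K r s e) '' (m '' D (r e)) = m '' R e) :
    let W : Submodule K Vsp := ⨆ u : V, LinearMap.range (Φ (lpaVert K r s u))
    ∃ (B : AlgBranchingSystem r s X)
      (π : LeavittAlgebra K r s →ₐ[K] Module.End K (X →₀ K))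
      (U : W ≃ₗ[K] (X →₀ K)),
      B.D = D ∧ B.R = R ∧
      (∀ (v : V) (x : X), π (lpaVert K r s v) (Finsupp.single x (1 : K)) =
        if x ∈ D v then Finsupp.single x (1 : K) else 0) ∧
      (∀ (e : E) (x : X), π (lpaEdge K r s e) (Finsupp.single x (1 : K)) =
        if x ∈ D (r e) then Finsupp.single (B.f e x) (1 : K) else 0) ∧
      (∀ (e : E) (x : X), π (lpaGhost K r s e) (Finsupp.single x (1 : K)) =
        if x ∈ R e then Finsupp.single (B.g e x) (1 : K) else 0) ∧
      ∃ hW : ∀ (a : LeavittAlgebra K r s), ∀ w ∈ W, Φ a w ∈ W,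
        ∀ (a : LeavittAlgebra K r s) (w : W),
          U ⟨Φ a (w : Vsp), hW a (w : Vsp) w.2⟩ = π a (U w) := by
  classical
  intro W
  -- Operator relations coming from the Leavitt relations
  have hrel : ∀ {a b : FreeAlgebra K (LeavittGen V E)}, LeavittRel K r s a b →
      Φ (RingQuot.mkAlgHom K (LeavittRel K r s) a) =
        Φ (RingQuot.mkAlgHom K (LeavittRel K r s) b) :=
    fun h => by rw [RingQuot.mkAlgHom_rel _ h]
  have hPP0 : ∀ {u v : V}, u ≠ v →
      Φ (lpaVert K r s u) * Φ (lpaVert K r s v) = 0 := by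
    intro u v huv
    have h := hrel (LeavittRel.vertex_mul (K := K) (r := r) (s := s) u v)
    rw [if_neg huv, map_mul, map_mul, map_zero, map_zero] at h
    exact h
  have hPPid : ∀ u : V, Φ (lpaVert K r s u) * Φ (lpaVert K r s u) = Φ (lpaVert K r s u) := by
    intro u
    have h := hrel (LeavittRel.vertex_mul (K := K) (r := r) (s := s) u u)
    rw [if_pos rfl, map_mul, map_mul] at h
    exact h
  have hSP : ∀ e : E, Φ (lpaEdge K r s e) * Φ (lpaVert K r s (r e)) = Φ (lpaEdge K r s e) := by
    intro e
    have h := hrel (LeavittRel.edge_mul_range (K := K) (r := r) (s := s) e)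
    rw [map_mul, map_mul] at h
    exact h
  have hGP : ∀ e : E, Φ (lpaGhost K r s e) * Φ (lpaVert K r s (s e)) = Φ (lpaGhost K r s e) := by
    intro e
    have h := hrel (LeavittRel.ghost_mul_source (K := K) (r := r) (s := s) e)
    rw [map_mul, map_mul] at h
    exact h
  have hGS : ∀ e : E, Φ (lpaGhost K r s e) * Φ (lpaEdge K r s e) = Φ (lpaVert K r s (r e)) := by
    intro e
    have h := hrel (LeavittRel.ghost_mul_edge (K := K) (r := r) (s := s) e e)
    rw [if_pos rfl, map_mul, map_mul] at h
    exact h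
  have hGS0 : ∀ {e d : E}, e ≠ d →
      Φ (lpaGhost K r s e) * Φ (lpaEdge K r s d) = 0 := by
    intro e d hed
    have h := hrel (LeavittRel.ghost_mul_edge (K := K) (r := r) (s := s) e d)
    rw [if_neg hed, map_mul, map_mul, map_zero, map_zero] at h
    exact h
  -- Pointwise action of the vertex projections on the basis vectors
  have hPact : ∀ (u : V) (x : X), x ∈ D u → Φ (lpaVert K r s u) (m x) = m x := by
    intro u x hx
    have hm : m x ∈ LinearMap.range (Φ (lpaVert K r s u)) := by
      rw [← hspanD u]
      exact Submodule.subset_span ⟨x, hx, rfl⟩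
    obtain ⟨z, hz⟩ := hm
    calc Φ (lpaVert K r s u) (m x) = Φ (lpaVert K r s u) (Φ (lpaVert K r s u) z) := by rw [hz]
      _ = (Φ (lpaVert K r s u) * Φ (lpaVert K r s u)) z := rfl
      _ = Φ (lpaVert K r s u) z := by rw [hPPid u]
      _ = m x := hz
  have hP0 : ∀ (u : V) (x : X), x ∉ D u → Φ (lpaVert K r s u) (m x) = 0 := by
    intro u x hx
    obtain ⟨v, hv⟩ := hcover x
    have huv : u ≠ v := fun h => hx (h ▸ hv)
    have hm : m x ∈ LinearMap.range (Φ (lpaVert K r s v)) := by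
      rw [← hspanD v]
      exact Submodule.subset_span ⟨x, hv, rfl⟩
    obtain ⟨z, hz⟩ := hm
    calc Φ (lpaVert K r s u) (m x) = (Φ (lpaVert K r s u) * Φ (lpaVert K r s v)) z := by
          rw [Module.End.mul_apply, hz]
      _ = 0 := by rw [hPP0 huv, LinearMap.zero_apply]
  have hPif : ∀ (u : V) (x : X),
      Φ (lpaVert K r s u) (m x) = if x ∈ D u then m x else 0 := by
    intro u x
    split_ifs with h
    · exact hPact u x h
    · exact hP0 u x h
  -- Construction of the maps f and g of the branching system
  have hfex : ∀ (e : E) (x : X), ∃ y : X,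
      (x ∈ D (r e) → y ∈ R e ∧ Φ (lpaEdge K r s e) (m x) = m y) ∧ (x ∉ D (r e) → y = x) := by
    intro e x
    by_cases hx : x ∈ D (r e)
    · have hm : Φ (lpaEdge K r s e) (m x) ∈ m '' R e := by
        rw [← hB2B e]
        exact ⟨m x, ⟨x, hx, rfl⟩, rfl⟩
      obtain ⟨y, hy1, hy2⟩ := hm
      exact ⟨y, fun _ => ⟨hy1, hy2.symm⟩, fun h => absurd hx h⟩
    · exact ⟨x, fun h => absurd h hx, fun _ => rfl⟩
  choose fe hfe1 hfe2 using hfex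
  have hgex : ∀ (e : E) (x : X), ∃ y : X,
      (x ∈ R e → y ∈ D (r e) ∧ Φ (lpaEdge K r s e) (m y) = m x) ∧ (x ∉ R e → y = x) := by
    intro e x
    by_cases hx : x ∈ R e
    · have hm : m x ∈ Φ (lpaEdge K r s e) '' (m '' D (r e)) := by
        rw [hB2B e]
        exact ⟨x, hx, rfl⟩
      obtain ⟨w, ⟨y, hy, rfl⟩, hw⟩ := hm
      exact ⟨y, fun _ => ⟨hy, hw⟩, fun h => absurd hx h⟩
    · exact ⟨x, fun h => absurd h hx, fun _ => rfl⟩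
  choose ge hge1 hge2 using hgex
  -- injectivity of m on each D u
  have hminj : ∀ u : V, Set.InjOn m (D u) := by
    intro u x hx y hy hxy
    exact congrArg Subtype.val ((hindep u).injective (a₁ := ⟨x, hx⟩) (a₂ := ⟨y, hy⟩) hxy)
  have hgf : ∀ e : E, ∀ x ∈ D (r e), ge e (fe e x) = x := by
    intro e x hx
    obtain ⟨hfR, hfval⟩ := hfe1 e x hx
    obtain ⟨hgD, hgval⟩ := hge1 e (fe e x) hfR
    have key : ∀ y ∈ D (r e),
        Φ (lpaGhost K r s e) (Φ (lpaEdge K r s e) (m y)) = m y := by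
      intro y hy
      rw [← Module.End.mul_apply, hGS, hPact _ _ hy]
    have a1 := key _ hgD
    rw [hgval] at a1
    have a2 := key _ hx
    rw [hfval] at a2
    exact hminj (r e) hgD hx (a1.symm.trans a2)
  have hfg : ∀ e : E, ∀ x ∈ R e, fe e (ge e x) = x := by
    intro e x hx
    obtain ⟨hgD, hgval⟩ := hge1 e x hx
    obtain ⟨hfR, hfval⟩ := hfe1 e (ge e x) hgD
    exact hminj (s e) (hRD e hfR) (hRD e hx) (hfval.symm.trans hgval)
  -- The branching system
  set B : AlgBranchingSystem r s X := ⟨R, D, hdisjR, hdisjD, hRD, fun v _ hne => hDeq v hne,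
    fe, ge, fun e x hx => (hfe1 e x hx).1, fun e x hx => (hge1 e x hx).1, hgf, hfg⟩ with hB
  have hBD : B.D = D := rfl
  have hBR : B.R = R := rfl
  have hBf : B.f = fe := rfl
  have hBg : B.g = ge := rfl
  -- The representation π
  set π : LeavittAlgebra K r s →ₐ[K] Module.End K (X →₀ K) :=
    RingQuot.liftAlgHom K ⟨FreeAlgebra.lift K (myGenOp K B), myGenRel K B⟩ with hπ
  have πV : ∀ v : V, π (lpaVert K r s v) = myGenOp K B (.vertex v) := by
    intro v
    show RingQuot.liftAlgHom K ⟨FreeAlgebra.lift K (myGenOp K B), myGenRel K B⟩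
      (RingQuot.mkAlgHom K (LeavittRel K r s) (FreeAlgebra.ι K (LeavittGen.vertex v))) = _
    rw [RingQuot.liftAlgHom_mkAlgHom_apply, FreeAlgebra.lift_ι_apply]
  have πE : ∀ e : E, π (lpaEdge K r s e) = myGenOp K B (.edge e) := by
    intro e
    show RingQuot.liftAlgHom K ⟨FreeAlgebra.lift K (myGenOp K B), myGenRel K B⟩
      (RingQuot.mkAlgHom K (LeavittRel K r s) (FreeAlgebra.ι K (LeavittGen.edge e))) = _
    rw [RingQuot.liftAlgHom_mkAlgHom_apply, FreeAlgebra.lift_ι_apply]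
  have πG : ∀ e : E, π (lpaGhost K r s e) = myGenOp K B (.ghost e) := by
    intro e
    show RingQuot.liftAlgHom K ⟨FreeAlgebra.lift K (myGenOp K B), myGenRel K B⟩
      (RingQuot.mkAlgHom K (LeavittRel K r s) (FreeAlgebra.ι K (LeavittGen.ghost e))) = _
    rw [RingQuot.liftAlgHom_mkAlgHom_apply, FreeAlgebra.lift_ι_apply]
  -- Global linear independence of m
  have hIndep : LinearIndependent K m := by
    rw [linearIndependent_iff]
    intro l hl
    ext x
    obtain ⟨u, hu⟩ := hcover x
    have hsub : ∀ l' ∈ Finsupp.supported K K (D u),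
        Finsupp.linearCombination K m l' = 0 → l' = 0 :=
      linearIndepOn_iff.mp (hindep u)
    have hfil : Finsupp.linearCombination K m (l.filter (· ∈ D u)) = 0 := by
      have h1 : Finsupp.linearCombination K m (l.filter (· ∈ D u)) =
          Φ (lpaVert K r s u) (Finsupp.linearCombination K m l) := by
        rw [Finsupp.linearCombination_apply, Finsupp.linearCombination_apply, map_finsuppSum,
          Finsupp.sum_filter_index, Finsupp.support_filter, Finset.sum_filter, Finsupp.sum]
        refine Finset.sum_congr rfl fun y _ => ?_
        rw [map_smul, hPif]
        split_ifs with h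
        · rfl
        · rw [smul_zero]
      rw [h1, hl, map_zero]
    have hl0 := hsub (l.filter (· ∈ D u)) (by
      rw [Finsupp.mem_supported]
      intro y hy
      rw [Finsupp.support_filter, Finset.coe_filter] at hy
      exact hy.2) hfil
    have hx0 : l.filter (· ∈ D u) x = l x := Finsupp.filter_apply_pos _ _ hu
    rw [hl0] at hx0
    exact hx0.symm
  -- The span of the m x is W
  have hrangeU : Set.range m = ⋃ u : V, m '' D u := by
    ext w
    constructor
    · rintro ⟨x, rfl⟩
      obtain ⟨u, hu⟩ := hcover x
      exact Set.mem_iUnion.mpr ⟨u, ⟨x, hu, rfl⟩⟩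
    · intro hw
      simp only [Set.mem_iUnion, Set.mem_image] at hw
      obtain ⟨u, x, _, rfl⟩ := hw
      exact ⟨x, rfl⟩
  have hspanW : Submodule.span K (Set.range m) = W := by
    rw [hrangeU, Submodule.span_iUnion]
    exact iSup_congr hspanD
  -- The linear equivalence U
  set b0 : Module.Basis X K (Submodule.span K (Set.range m)) := Module.Basis.span hIndep with hb0
  set U : W ≃ₗ[K] (X →₀ K) :=
    (LinearEquiv.ofEq W (Submodule.span K (Set.range m)) hspanW.symm).trans b0.repr with hU
  have hTU : ∀ p : W, Finsupp.linearCombination K m (U p) = (p : Vsp) := by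
    intro p
    set q : Submodule.span K (Set.range m) :=
      LinearEquiv.ofEq W (Submodule.span K (Set.range m)) hspanW.symm p with hq
    have hUq : U p = b0.repr q := rfl
    have h2 := congrArg ((Submodule.span K (Set.range m)).subtype) (b0.linearCombination_repr q)
    rw [Finsupp.apply_linearCombination] at h2
    have h3 : ((Submodule.span K (Set.range m)).subtype ∘ ⇑b0) = m := by
      funext y
      simp only [Function.comp_apply, Submodule.coe_subtype, hb0, Module.Basis.span_apply]
    rw [h3] at h2
    rw [hUq, h2]
    rfl
  -- Pointwise action of edges and ghost edges
  have hEif : ∀ (e : E) (x : X),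
      Φ (lpaEdge K r s e) (m x) = if x ∈ D (r e) then m (fe e x) else 0 := by
    intro e x
    split_ifs with hx
    · exact (hfe1 e x hx).2
    · calc Φ (lpaEdge K r s e) (m x)
          = (Φ (lpaEdge K r s e) * Φ (lpaVert K r s (r e))) (m x) := by rw [hSP]
        _ = 0 := by rw [Module.End.mul_apply, hP0 _ _ hx, map_zero]
  have hGif : ∀ (e : E) (x : X),
      Φ (lpaGhost K r s e) (m x) = if x ∈ R e then m (ge e x) else 0 := by
    intro e x
    split_ifs with hx
    · obtain ⟨hgD, hgval⟩ := hge1 e x hx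
      calc Φ (lpaGhost K r s e) (m x)
          = (Φ (lpaGhost K r s e) * Φ (lpaEdge K r s e)) (m (ge e x)) := by
            rw [Module.End.mul_apply, hgval]
        _ = m (ge e x) := by rw [hGS, hPact _ _ hgD]
    · obtain ⟨v, hv⟩ := hcover x
      by_cases hvs : v = s e
      · subst hvs
        have hx2 := hv
        rw [hDeq (s e) ⟨e, rfl⟩] at hx2
        simp only [Set.mem_iUnion, Set.mem_setOf_eq, exists_prop] at hx2
        obtain ⟨d, hd, hxd⟩ := hx2
        have hde : e ≠ d := fun h => hx (h ▸ hxd)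
        have hm : m x ∈ LinearMap.range (Φ (lpaEdge K r s d) * Φ (lpaGhost K r s d)) := by
          rw [← hspanR d]
          exact Submodule.subset_span ⟨x, hxd, rfl⟩
        obtain ⟨z, hz⟩ := hm
        calc Φ (lpaGhost K r s e) (m x)
            = (Φ (lpaGhost K r s e) * Φ (lpaEdge K r s d)) (Φ (lpaGhost K r s d) z) := by
              rw [Module.End.mul_apply, ← Module.End.mul_apply (Φ (lpaEdge K r s d)), hz]
          _ = 0 := by rw [hGS0 hde, LinearMap.zero_apply]
      · have hxse : x ∉ D (s e) := fun h =>
          Set.eq_empty_iff_forall_notMem.mp (hdisjD hvs) x ⟨hv, h⟩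
        calc Φ (lpaGhost K r s e) (m x)
            = (Φ (lpaGhost K r s e) * Φ (lpaVert K r s (s e))) (m x) := by rw [hGP]
          _ = 0 := by rw [Module.End.mul_apply, hP0 _ _ hxse, map_zero]
  -- The intertwining relations on generators
  have hcaseV : ∀ u : V, (Φ (lpaVert K r s u)) ∘ₗ Finsupp.linearCombination K m =
      Finsupp.linearCombination K m ∘ₗ (π (lpaVert K r s u) : (X →₀ K) →ₗ[K] (X →₀ K)) := by
    intro u
    refine Finsupp.lhom_ext fun x c => ?_
    rw [LinearMap.comp_apply, LinearMap.comp_apply, Finsupp.linearCombination_single, πV,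
      myGenOp_vertex, map_smul, hPif, hBD]
    split_ifs with h
    · rw [Finsupp.linearCombination_single]
    · rw [map_zero, smul_zero]
  have hcaseE : ∀ e : E, (Φ (lpaEdge K r s e)) ∘ₗ Finsupp.linearCombination K m =
      Finsupp.linearCombination K m ∘ₗ (π (lpaEdge K r s e) : (X →₀ K) →ₗ[K] (X →₀ K)) := by
    intro e
    refine Finsupp.lhom_ext fun x c => ?_
    rw [LinearMap.comp_apply, LinearMap.comp_apply, Finsupp.linearCombination_single, πE,
      myGenOp_edge, map_smul, hEif, hBD, hBf]
    split_ifs with h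
    · rw [Finsupp.linearCombination_single]
    · rw [map_zero, smul_zero]
  have hcaseG : ∀ e : E, (Φ (lpaGhost K r s e)) ∘ₗ Finsupp.linearCombination K m =
      Finsupp.linearCombination K m ∘ₗ (π (lpaGhost K r s e) : (X →₀ K) →ₗ[K] (X →₀ K)) := by
    intro e
    refine Finsupp.lhom_ext fun x c => ?_
    rw [LinearMap.comp_apply, LinearMap.comp_apply, Finsupp.linearCombination_single, πG,
      myGenOp_ghost, map_smul, hGif, hBR, hBg]
    split_ifs with h
    · rw [Finsupp.linearCombination_single]
    · rw [map_zero, smul_zero]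
  -- The intertwining relation for all elements
  have hkey : ∀ a : LeavittAlgebra K r s, (Φ a) ∘ₗ Finsupp.linearCombination K m =
      Finsupp.linearCombination K m ∘ₗ (π a : (X →₀ K) →ₗ[K] (X →₀ K)) := by
    intro a
    obtain ⟨b, rfl⟩ := RingQuot.mkAlgHom_surjective K (LeavittRel K r s) a
    induction b using FreeAlgebra.induction with
    | grade0 k =>
        simp only [AlgHom.commutes]
        refine LinearMap.ext fun φ => ?_
        simp only [LinearMap.comp_apply, Module.algebraMap_end_apply, map_smul]
    | grade1 g =>
        cases g with
        | vertex u => exact hcaseV u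
        | edge e => exact hcaseE e
        | ghost e => exact hcaseG e
    | mul a b ha hb =>
        simp only [map_mul]
        rw [Module.End.mul_eq_comp, Module.End.mul_eq_comp, LinearMap.comp_assoc, hb,
          ← LinearMap.comp_assoc, ha, LinearMap.comp_assoc]
    | add a b ha hb =>
        simp only [map_add]
        rw [LinearMap.add_comp, LinearMap.comp_add, ha, hb]
  -- W is invariant
  have hWmem : ∀ w : Vsp, w ∈ W ↔ ∃ φ : X →₀ K, Finsupp.linearCombination K m φ = w := by
    intro w
    rw [← hspanW, ← Finsupp.range_linearCombination]
    exact LinearMap.mem_range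
  have hW : ∀ a : LeavittAlgebra K r s, ∀ w ∈ W, Φ a w ∈ W := by
    intro a w hw
    obtain ⟨φ, rfl⟩ := (hWmem w).mp hw
    refine (hWmem _).mpr ⟨π a φ, ?_⟩
    exact (LinearMap.congr_fun (hkey a) φ).symm
  refine ⟨B, π, U, hBD, hBR, ?_, ?_, ?_, hW, ?_⟩
  · intro v x
    rw [πV, myGenOp_vertex, hBD]
  · intro e x
    rw [πE, myGenOp_edge, hBD]
  · intro e x
    rw [πG, myGenOp_ghost, hBR]
  · intro a w
    refine hIndep ?_
    rw [hTU ⟨Φ a (w : Vsp), hW a (w : Vsp) w.2⟩]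
    show Φ a (w : Vsp) = Finsupp.linearCombination K m (π a (U w))
    rw [← hTU w]
    exact LinearMap.congr_fun (hkey a) (U w)
end
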